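/- There is no bounded real-valued function f on the open unit disk 𝔻 ⊆ ℂ whose Laplacian satisfies ∇²f(z) = 1/(1 - |z|²)² for all z ∈ 𝔻. -/

import Mathlib

open Metric Filter Set Complex

/-- 1D second derivative test: at a local max, the second derivative is ≤ 0. -/
lemma second_deriv_test {φ ψ : ℝ → ℝ} {a : ℝ}
    (hmax : IsLocalMax φ 0)
    (hφ : ∀ᶠ t in nhds 0, HasDerivAt φ (ψ t) t)
    (hψ : HasDerivAt ψ a 0) : a ≤ 0 := by
  by_contra h
  push_neg at h
  have hψ0 : ψ 0 = 0 := by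
    have h1 : deriv φ 0 = ψ 0 := hφ.self_of_nhds.deriv
    have h2 : deriv φ 0 = 0 := hmax.deriv_eq_zero
    linarith
  have hslope : Tendsto (slope ψ 0) (nhdsWithin 0 {(0:ℝ)}ᶜ) (nhds a) :=
    hasDerivAt_iff_tendsto_slope.1 hψ
  have hpos' : ∀ᶠ t in nhds (0:ℝ), t ≠ 0 → 0 < slope ψ 0 t := by
    have := hslope.eventually (eventually_gt_nhds h)
    rwa [eventually_nhdsWithin_iff] at this
  obtain ⟨δ₁, hδ₁, H1⟩ := Metric.eventually_nhds_iff.mp hpos'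
  obtain ⟨δ₂, hδ₂, H2⟩ := Metric.eventually_nhds_iff.mp hφ
  obtain ⟨δ₃, hδ₃, H3⟩ := Metric.eventually_nhds_iff.mp hmax
  set δ := min δ₁ (min δ₂ δ₃) with hδdef
  have hd1 : δ ≤ δ₁ := min_le_left _ _
  have hd2 : δ ≤ δ₂ := le_trans (min_le_right _ _) (min_le_left _ _)
  have hd3 : δ ≤ δ₃ := le_trans (min_le_right _ _) (min_le_right _ _)
  have hδ : 0 < δ := lt_min hδ₁ (lt_min hδ₂ hδ₃)
  have hdist : ∀ x : ℝ, 0 ≤ x → x < δ → dist x (0:ℝ) < δ := by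
    intro x hx0 hxδ
    rw [Real.dist_eq, sub_zero, _root_.abs_of_nonneg hx0]; exact hxδ
  have hψpos : ∀ t ∈ Ioo (0:ℝ) δ, 0 < ψ t := by
    intro t ht
    have h1 : 0 < slope ψ 0 t :=
      H1 (lt_of_lt_of_le (hdist t ht.1.le ht.2) hd1) (ne_of_gt ht.1)
    rw [slope_def_field, hψ0, sub_zero, sub_zero] at h1
    rcases div_pos_iff.mp h1 with ⟨h2, _⟩ | ⟨_, h2⟩
    · exact h2
    · linarith [ht.1]
  have hb : (0:ℝ) < δ/2 := by positivity
  obtain ⟨c, hc, hceq⟩ := exists_hasDerivAt_eq_slope φ ψ hb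
    (fun x hx => (H2 (lt_of_lt_of_le (hdist x hx.1 (by linarith [hx.2])) hd2)).continuousAt.continuousWithinAt)
    (fun x hx => H2 (lt_of_lt_of_le (hdist x hx.1.le (by linarith [hx.2])) hd2))
  have hc1 : 0 < ψ c := hψpos c ⟨hc.1, by linarith [hc.2]⟩
  have hφle : φ (δ/2) ≤ φ 0 := H3 (lt_of_lt_of_le (hdist _ hb.le (by linarith)) hd3)
  rw [hceq] at hc1
  rcases div_pos_iff.mp hc1 with ⟨h2, _⟩ | ⟨_, h2⟩
  · linarith
  · linarith

/-- Directional second derivative test at a local max. -/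
lemma dir_test {u : ℂ → ℝ} {p d : ℂ}
    (hmax : IsLocalMax u p)
    (h1 : ∀ᶠ z in nhds p, DifferentiableAt ℝ u z)
    (h2 : DifferentiableAt ℝ (fun z => fderiv ℝ u z d) p) :
    fderiv ℝ (fun z => fderiv ℝ u z d) p d ≤ 0 := by
  set line : ℝ → ℂ := fun t => p + t • d with hline
  have hlinederiv : ∀ t : ℝ, HasDerivAt line d t := by
    intro t
    exact (by simpa using ((hasDerivAt_id t).smul_const d).const_add p : HasDerivAt (fun x : ℝ => p + x • d) d t)
  have hlinecont : Continuous line := by fun_prop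
  have hline0 : line 0 = p := by simp [hline]
  have htend : Tendsto line (nhds 0) (nhds p) := by
    rw [← hline0]; exact hlinecont.continuousAt
  apply second_deriv_test (φ := u ∘ line) (ψ := fun t => fderiv ℝ u (line t) d)
  · -- local max of composition
    have := htend.eventually hmax
    unfold IsLocalMax IsMaxFilter
    simpa [hline0, Function.comp] using this
  · -- derivative of composition
    filter_upwards [htend.eventually h1] with t ht
    exact ht.hasFDerivAt.comp_hasDerivAt t (hlinederiv t)
  · -- second derivative
    have h2' : HasFDerivAt (fun z => fderiv ℝ u z d)
        (fderiv ℝ (fun z => fderiv ℝ u z d) p) (line 0) := by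
      rw [hline0]; exact h2.hasFDerivAt
    have := h2'.comp_hasDerivAt 0 (hlinederiv 0)
    exact this

noncomputable def qq (z : ℂ) : ℝ := 1 - z.re * z.re - z.im * z.im
noncomputable def ww (z : ℂ) : ℝ := Real.log (qq z) * (4:ℝ)⁻¹ + (z.re * z.re + z.im * z.im)
noncomputable def gg1 (z : ℂ) : ℝ := -z.re * (2 * qq z)⁻¹ + 2 * z.re
noncomputable def ggI (z : ℂ) : ℝ := -z.im * (2 * qq z)⁻¹ + 2 * z.im

lemma hre (z : ℂ) : HasFDerivAt (fun z : ℂ => z.re) Complex.reCLM z := Complex.reCLM.hasFDerivAt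
lemma him (z : ℂ) : HasFDerivAt (fun z : ℂ => z.im) Complex.imCLM z := Complex.imCLM.hasFDerivAt

lemma qq_deriv (z : ℂ) : HasFDerivAt qq
    ((0 : ℂ →L[ℝ] ℝ) - (z.re • Complex.reCLM + z.re • Complex.reCLM)
      - (z.im • Complex.imCLM + z.im • Complex.imCLM)) z := by
  exact ((hasFDerivAt_const (1:ℝ) z).sub ((hre z).mul (hre z))).sub ((him z).mul (him z))

lemma ww_deriv {z : ℂ} (h : qq z ≠ 0) : HasFDerivAt ww
    (((4:ℝ)⁻¹ • ((qq z)⁻¹ • ((0 : ℂ →L[ℝ] ℝ) - (z.re • Complex.reCLM + z.re • Complex.reCLM)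
      - (z.im • Complex.imCLM + z.im • Complex.imCLM))))
     + ((z.re • Complex.reCLM + z.re • Complex.reCLM) + (z.im • Complex.imCLM + z.im • Complex.imCLM))) z := by
  exact (((Real.hasDerivAt_log h).comp_hasFDerivAt z (qq_deriv z)).mul_const ((4:ℝ)⁻¹)).add
    (((hre z).mul (hre z)).add ((him z).mul (him z)))

lemma ww_diff {z : ℂ} (h : qq z ≠ 0) : DifferentiableAt ℝ ww z := (ww_deriv h).differentiableAt

lemma ww_fderiv1 {z : ℂ} (h : qq z ≠ 0) : fderiv ℝ ww z 1 = gg1 z := by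
  rw [(ww_deriv h).fderiv]
  simp [gg1]
  field_simp
  ring

lemma ww_fderivI {z : ℂ} (h : qq z ≠ 0) : fderiv ℝ ww z I = ggI z := by
  rw [(ww_deriv h).fderiv]
  simp [ggI]
  field_simp
  ring

lemma inv2q_deriv {z : ℂ} (h : qq z ≠ 0) :
    HasFDerivAt (fun z : ℂ => (2 * qq z)⁻¹)
      ((-((2 * qq z) ^ 2)⁻¹) • ((2:ℝ) • ((0 : ℂ →L[ℝ] ℝ) - (z.re • Complex.reCLM + z.re • Complex.reCLM)
        - (z.im • Complex.imCLM + z.im • Complex.imCLM)))) z := by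
  have h2 : (2:ℝ) * qq z ≠ 0 := by simpa using h
  exact (hasDerivAt_inv h2).comp_hasFDerivAt z ((qq_deriv z).const_mul 2)

lemma gg1_deriv {z : ℂ} (h : qq z ≠ 0) :
    HasFDerivAt gg1
      ((-z.re) • ((-((2 * qq z) ^ 2)⁻¹) • ((2:ℝ) • ((0 : ℂ →L[ℝ] ℝ) - (z.re • Complex.reCLM + z.re • Complex.reCLM)
        - (z.im • Complex.imCLM + z.im • Complex.imCLM))))
       + ((2 * qq z)⁻¹) • (-Complex.reCLM)
       + ((2:ℝ) • Complex.reCLM)) z := by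
  have h1 := ((hre z).neg.mul (inv2q_deriv h)).add ((hre z).const_mul 2)
  exact h1

lemma ggI_deriv {z : ℂ} (h : qq z ≠ 0) :
    HasFDerivAt ggI
      ((-z.im) • ((-((2 * qq z) ^ 2)⁻¹) • ((2:ℝ) • ((0 : ℂ →L[ℝ] ℝ) - (z.re • Complex.reCLM + z.re • Complex.reCLM)
        - (z.im • Complex.imCLM + z.im • Complex.imCLM))))
       + ((2 * qq z)⁻¹) • (-Complex.imCLM)
       + ((2:ℝ) • Complex.imCLM)) z := by
  have h1 := ((him z).neg.mul (inv2q_deriv h)).add ((him z).const_mul 2)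
  exact h1

lemma gg1_diff {z : ℂ} (h : qq z ≠ 0) : DifferentiableAt ℝ gg1 z := (gg1_deriv h).differentiableAt
lemma ggI_diff {z : ℂ} (h : qq z ≠ 0) : DifferentiableAt ℝ ggI z := (ggI_deriv h).differentiableAt

lemma lap_ww {z : ℂ} (h : qq z ≠ 0) :
    fderiv ℝ gg1 z 1 + fderiv ℝ ggI z Complex.I = -(1 / (qq z) ^ 2) + 4 := by
  rw [(gg1_deriv h).fderiv, (ggI_deriv h).fderiv]
  simp
  simp only [qq] at h ⊢
  field_simp
  ring


/-- The Laplacian `∇² = ∂²/∂x² + ∂²/∂y²` of a function `f : ℂ → ℝ`,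
expressed via real Fréchet derivatives in the directions `1` and `I`. -/
noncomputable def myLaplacian (f : ℂ → ℝ) (z : ℂ) : ℝ :=
  fderiv ℝ (fun w => fderiv ℝ f w 1) z 1 +
  fderiv ℝ (fun w => fderiv ℝ f w Complex.I) z Complex.I

/-- There is no bounded (twice continuously differentiable) real-valued function `f`
on the open unit disk whose Laplacian satisfies `∇²f(z) = 1/(1 - |z|²)²` there. -/
theorem stmt_0 :
    ¬ ∃ (f : ℂ → ℝ) (C : ℝ),
      ContDiffOn ℝ 2 f (Metric.ball (0 : ℂ) 1) ∧
      (∀ z ∈ Metric.ball (0 : ℂ) 1, |f z| ≤ C) ∧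
      (∀ z ∈ Metric.ball (0 : ℂ) 1,
        myLaplacian f z = 1 / (1 - ‖z‖ ^ 2) ^ 2) := by
  rintro ⟨f, C, hf, hbound, hlap⟩
  set S := Metric.ball (0 : ℂ) 1 with hS
  have hSopen : IsOpen S := Metric.isOpen_ball
  have habs : ∀ z : ℂ, ‖z‖ ^ 2 = z.re * z.re + z.im * z.im := by
    intro z
    rw [Complex.sq_norm, Complex.normSq_apply]
  have hq_pos : ∀ z ∈ S, 0 < qq z := by
    intro z hz
    have h1 : ‖z‖ < 1 := by simpa [hS] using hz
    have h2 : ‖z‖ < 1 := by exact h1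
    have h3 : ‖z‖ ^ 2 < 1 := by nlinarith [norm_nonneg z]
    rw [habs z] at h3
    simp only [qq]; linarith
  set F := fun z => f z + ww z with hF
  -- differentiability facts
  have hfd : ∀ z ∈ S, DifferentiableAt ℝ f z := fun z hz =>
    (hf.contDiffAt (hSopen.mem_nhds hz)).differentiableAt two_ne_zero
  have hfd' : ∀ (d : ℂ), ∀ z ∈ S, DifferentiableAt ℝ (fun w => fderiv ℝ f w d) z := by
    intro d z hz
    have h1 : ContDiffAt ℝ 1 (fderiv ℝ f) z :=
      (hf.contDiffAt (hSopen.mem_nhds hz)).fderiv_right (by norm_num)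
    exact (h1.differentiableAt one_ne_zero).clm_apply (differentiableAt_const d)
  have hFd : ∀ z ∈ S, DifferentiableAt ℝ F z := fun z hz =>
    (hfd z hz).add (ww_diff (ne_of_gt (hq_pos z hz)))
  -- first derivatives of F on S
  have hF1 : ∀ z ∈ S, fderiv ℝ F z 1 = fderiv ℝ f z 1 + gg1 z := by
    intro z hz
    rw [hF, fderiv_fun_add (hfd z hz) (ww_diff (ne_of_gt (hq_pos z hz)))]
    simp [ww_fderiv1 (ne_of_gt (hq_pos z hz))]
  have hFI : ∀ z ∈ S, fderiv ℝ F z Complex.I = fderiv ℝ f z Complex.I + ggI z := by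
    intro z hz
    rw [hF, fderiv_fun_add (hfd z hz) (ww_diff (ne_of_gt (hq_pos z hz)))]
    simp [ww_fderivI (ne_of_gt (hq_pos z hz))]
  -- second derivative structure
  have hEq1 : ∀ p ∈ S, (fun z => fderiv ℝ F z 1) =ᶠ[nhds p]
      (fun z => fderiv ℝ f z 1 + gg1 z) := by
    intro p hp
    filter_upwards [hSopen.mem_nhds hp] with z hz using hF1 z hz
  have hEqI : ∀ p ∈ S, (fun z => fderiv ℝ F z Complex.I) =ᶠ[nhds p]
      (fun z => fderiv ℝ f z Complex.I + ggI z) := by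
    intro p hp
    filter_upwards [hSopen.mem_nhds hp] with z hz using hFI z hz
  have hlapF : ∀ p ∈ S, myLaplacian F p = 4 := by
    intro p hp
    have hqne := ne_of_gt (hq_pos p hp)
    have e1 : fderiv ℝ (fun z => fderiv ℝ F z 1) p 1
        = fderiv ℝ (fun z => fderiv ℝ f z 1) p 1 + fderiv ℝ gg1 p 1 := by
      rw [(hEq1 p hp).fderiv_eq, fderiv_fun_add (hfd' 1 p hp) (gg1_diff hqne)]
      simp
    have eI : fderiv ℝ (fun z => fderiv ℝ F z Complex.I) p Complex.I
        = fderiv ℝ (fun z => fderiv ℝ f z Complex.I) p Complex.I + fderiv ℝ ggI p Complex.I := by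
      rw [(hEqI p hp).fderiv_eq, fderiv_fun_add (hfd' Complex.I p hp) (ggI_diff hqne)]
      simp
    have hsum := lap_ww hqne
    have hq_eq : qq p = 1 - ‖p‖ ^ 2 := by
      rw [habs p]; simp [qq]; ring
    have hflap := hlap p hp
    unfold myLaplacian at hflap ⊢
    rw [e1, eI]
    rw [hq_eq] at hsum
    linarith [hflap, hsum]
  -- choose the radius
  set t := min (1/2 : ℝ) (Real.exp (4 * (f 0 - C - 2))) with ht_def
  have ht0 : 0 < t := lt_min (by norm_num) (Real.exp_pos _)
  have ht1 : t ≤ 1/2 := min_le_left _ _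
  set r := Real.sqrt (1 - t) with hr_def
  have hr0 : 0 ≤ r := Real.sqrt_nonneg _
  have hr2 : r ^ 2 = 1 - t := Real.sq_sqrt (by linarith)
  have hr1 : r < 1 := by
    nlinarith [hr2, ht0, hr0]
  set K := Metric.closedBall (0 : ℂ) r with hK
  have hKS : K ⊆ S := by
    intro z hz
    have : ‖z‖ ≤ r := by simpa [hK] using hz
    simp only [hS, Metric.mem_ball, Complex.dist_eq, sub_zero]
    calc ‖z‖ = ‖z‖ := rfl
      _ ≤ r := this
      _ < 1 := hr1
  have h0K : (0 : ℂ) ∈ K := by simp [hK, hr0]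
  have hFcont : ContinuousOn F K := fun z hz =>
    (hFd z (hKS hz)).continuousAt.continuousWithinAt
  obtain ⟨p, hpK, hpmax⟩ := (isCompact_closedBall (0:ℂ) r).exists_isMaxOn ⟨0, h0K⟩ hFcont
  -- p must be on the boundary
  have hpS : p ∈ S := hKS hpK
  have hpr : ‖p‖ = r := by
    by_contra hne
    have hlt : ‖p‖ < r := lt_of_le_of_ne (by simpa [hK] using hpK) hne
    have hmem : Metric.ball (0:ℂ) r ∈ nhds p := by
      apply Metric.isOpen_ball.mem_nhds
      simpa [Complex.dist_eq] using hlt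
    have hlocal : IsLocalMax F p :=
      hpmax.isLocalMax (Filter.mem_of_superset hmem Metric.ball_subset_closedBall)
    have hd1 : ∀ᶠ z in nhds p, DifferentiableAt ℝ F z := by
      filter_upwards [hSopen.mem_nhds hpS] with z hz using hFd z hz
    have ht1' : fderiv ℝ (fun z => fderiv ℝ F z 1) p 1 ≤ 0 := by
      apply dir_test hlocal hd1
      exact ((hfd' 1 p hpS).add (gg1_diff (ne_of_gt (hq_pos p hpS)))).congr_of_eventuallyEq
        (hEq1 p hpS)
    have htI' : fderiv ℝ (fun z => fderiv ℝ F z Complex.I) p Complex.I ≤ 0 := by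
      apply dir_test hlocal hd1
      exact ((hfd' Complex.I p hpS).add (ggI_diff (ne_of_gt (hq_pos p hpS)))).congr_of_eventuallyEq
        (hEqI p hpS)
    have := hlapF p hpS
    unfold myLaplacian at this
    linarith
  -- boundary estimate
  have hnorm2 : p.re * p.re + p.im * p.im = r ^ 2 := by
    rw [← habs p, hpr]
  have hqp : qq p = t := by simp only [qq]; linarith [hnorm2, hr2]
  have hF0 : F 0 = f 0 := by simp [hF, ww, qq]
  have hFp : F p = f p + Real.log t * (4:ℝ)⁻¹ + r ^ 2 := by
    simp only [hF, ww, hqp, hnorm2]; ring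
  have hle : F 0 ≤ F p := hpmax h0K
  have hlogt : Real.log t ≤ 4 * (f 0 - C - 2) := by
    calc Real.log t ≤ Real.log (Real.exp (4 * (f 0 - C - 2))) :=
          Real.log_le_log ht0 (min_le_right _ _)
      _ = 4 * (f 0 - C - 2) := Real.log_exp _
  have hfp : f p ≤ C := le_trans (le_abs_self _) (hbound p hpS)
  rw [hF0, hFp] at hle
  nlinarith [hr2, ht0]
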